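/- arXiv:1509.01840 — 2 statements merged into one kernel-verified Lean document; each statement's English description precedes it below -/
import Mathlib

section
/- For each integer k ≥ 1, ∫_{1/(k+1)}^1 ∫_{(1-x)/(k+1)}^{(1-x)/k} 12/(π² x(1+y)) dy dx + ∫_{1/(k+2)}^{1/(k+1)} ∫_{(1-x)/(k+1)}^{x} 12/(π² x(1+y)) dy dx = (6/π²)[Li₂(1/(k+1)²) − Li₂(1/(k+2)²) + 4 log²(k+1) − 2 log²((k+2)/(k+1)) − 2 log(k(k+2)) log(k+1)]. -/
open Real

/-- The dilogarithm Li₂(z) = ∑_{n≥1} zⁿ/n². -/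
noncomputable def Li2 (z : ℝ) : ℝ := ∑' n : ℕ, z ^ (n + 1) / (n + 1) ^ 2


lemma aux_sum : Summable (fun n : ℕ => 1 / ((n : ℝ) + 1) ^ 2) := by
  have := Real.summable_one_div_nat_pow.2 (le_refl 2)
  have h2 := (summable_nat_add_iff (f := fun n : ℕ => 1 / (n : ℝ) ^ 2) 1).2 this
  refine h2.congr fun n => ?_
  push_cast; ring

lemma li2_summable {z : ℝ} (hz : |z| ≤ 1) :
    Summable (fun n : ℕ => z ^ (n + 1) / ((n : ℝ) + 1) ^ 2) := by
  apply Summable.of_norm_bounded (g := fun n : ℕ => 1 / ((n : ℝ) + 1) ^ 2) aux_sum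
  intro n
  rw [norm_div, norm_pow, Real.norm_eq_abs]
  have h1 : |z| ^ (n + 1) ≤ 1 := pow_le_one₀ (abs_nonneg z) hz
  have h2 : ‖((n : ℝ) + 1) ^ 2‖ = ((n : ℝ) + 1) ^ 2 := by
    rw [Real.norm_eq_abs, abs_of_pos]; positivity
  rw [h2]
  apply div_le_div_of_nonneg_right h1 (by positivity) |>.trans_eq rfl

lemma li2_hasSum {z : ℝ} (hz : |z| ≤ 1) :
    HasSum (fun n : ℕ => z ^ (n + 1) / ((n : ℝ) + 1) ^ 2) (Li2 z) :=
  (li2_summable hz).hasSum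


lemma li2_hasDerivAt {z : ℝ} (hz : |z| < 1) :
    HasDerivAt Li2 (∑' n : ℕ, z ^ n / ((n : ℝ) + 1)) z := by
  set r : ℝ := (|z| + 1) / 2 with hr
  have h0r : 0 < r := by positivity
  have hr1 : r < 1 := by simp only [hr]; linarith
  have hzr : |z| < r := by simp only [hr]; linarith
  apply hasDerivAt_tsum_of_isPreconnected (u := fun n : ℕ => r ^ n)
      (g := fun (n : ℕ) (y : ℝ) => y ^ (n + 1) / ((n : ℝ) + 1) ^ 2)
      (g' := fun (n : ℕ) (y : ℝ) => y ^ n / ((n : ℝ) + 1))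
      (t := Set.Ioo (-r) r) (y₀ := 0)
      (summable_geometric_of_lt_one h0r.le hr1) isOpen_Ioo (convex_Ioo _ _).isPreconnected
  · intro n y hy
    have h1 : HasDerivAt (fun y : ℝ => y ^ (n + 1)) ((n + 1 : ℕ) * y ^ n) y := hasDerivAt_pow _ _
    have := h1.div_const (((n : ℝ) + 1) ^ 2)
    convert this using 1
    · rfl
    have hne : ((n : ℝ) + 1) ≠ 0 := by positivity
    push_cast
    field_simp
  · intro n y hy
    have hyr : |y| < r := abs_lt.2 ⟨hy.1, hy.2⟩
    rw [norm_div, Real.norm_eq_abs, Real.norm_eq_abs, abs_pow]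
    have h1 : |y| ^ n ≤ r ^ n := pow_le_pow_left₀ (abs_nonneg y) hyr.le n
    have h2 : |(n : ℝ) + 1| = (n : ℝ) + 1 := abs_of_pos (by positivity)
    rw [h2]
    calc |y| ^ n / ((n : ℝ) + 1) ≤ |y| ^ n / 1 :=
          div_le_div_of_nonneg_left (by positivity) one_pos (by push_cast; linarith)
      _ = |y| ^ n := div_one _
      _ ≤ r ^ n := h1
  · exact ⟨by linarith, h0r⟩
  · apply Summable.congr (summable_zero)
    intro n; simp
  · exact abs_lt.1 hzr |> fun h => ⟨h.1, h.2⟩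

lemma li2_hasDerivAt' {z : ℝ} (hz : |z| < 1) (hz0 : z ≠ 0) :
    HasDerivAt Li2 (-Real.log (1 - z) / z) z := by
  have h := li2_hasDerivAt hz
  have hs : HasSum (fun n : ℕ => z ^ (n + 1) / ((n : ℝ) + 1)) (-Real.log (1 - z)) :=
    Real.hasSum_pow_div_log_of_abs_lt_one hz
  have hs2 : HasSum (fun n : ℕ => z ^ n / ((n : ℝ) + 1)) (-Real.log (1 - z) / z) := by
    have h2 := hs.mul_left z⁻¹
    convert h2 using 1
    · rfl
    · funext n
      rw [pow_succ']
      field_simp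
    · rw [div_eq_inv_mul]
  rwa [hs2.tsum_eq] at h


lemma li2_sq {z : ℝ} (hz : |z| ≤ 1) : Li2 z + Li2 (-z) = Li2 (z ^ 2) / 2 := by
  have hz2 : |z ^ 2| ≤ 1 := by rw [abs_pow]; exact pow_le_one₀ (abs_nonneg z) hz
  have hA := li2_hasSum hz
  have hB := li2_hasSum (z := -z) (by rwa [abs_neg])
  have hAB := hA.add hB
  have hC := (li2_hasSum hz2).div_const 2
  -- reindex hC along n ↦ 2n+1
  set h : ℕ → ℝ := fun n => z ^ (n + 1) / ((n : ℝ) + 1) ^ 2 + (-z) ^ (n + 1) / ((n : ℝ) + 1) ^ 2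
    with hh
  have hinj : Function.Injective (fun n : ℕ => 2 * n + 1) := by
    intro a b hab
    simp only [] at hab
    omega
  have hvan : ∀ m : ℕ, m ∉ Set.range (fun n : ℕ => 2 * n + 1) → h m = 0 := by
    intro m hm
    have hme : Even m := by
      rcases Nat.even_or_odd m with he | ho
      · exact he
      · obtain ⟨j, hj⟩ := ho
        exact absurd ⟨j, hj.symm⟩ hm
    have hodd : Odd (m + 1) := Even.add_one hme
    rw [hh]
    simp only []
    rw [hodd.neg_pow]
    ring
  have key : HasSum h (Li2 (z ^ 2) / 2) := by
    rw [← Function.Injective.hasSum_iff hinj hvan]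
    convert hC using 1
    rfl
    funext n
    simp only [hh, Function.comp]
    have : (-z) ^ (2 * n + 1 + 1) = z ^ (2 * n + 1 + 1) := by
      rw [show 2 * n + 1 + 1 = 2 * (n + 1) by ring, pow_mul, pow_mul, neg_sq]
    have hcast : ((2 * n + 1 : ℕ) : ℝ) + 1 = 2 * ((n : ℝ) + 1) := by push_cast; ring
    have hpow : z ^ (2 * n + 1 + 1) = (z ^ 2) ^ (n + 1) := by
      rw [show 2 * n + 1 + 1 = 2 * (n + 1) from by ring, pow_mul]
    rw [this, hcast, hpow]
    have hne : ((n : ℝ) + 1) ≠ 0 := by positivity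
    field_simp
    ring
  exact hAB.unique key


-- inner integral
lemma inner_int (x p q : ℝ) (hx : x ≠ 0) (hp : -1 < p) (hq : -1 < q) :
    ∫ y in p..q, 12 / (π ^ 2 * x * (1 + y))
      = 12 / (π ^ 2 * x) * (Real.log (1 + q) - Real.log (1 + p)) := by
  have hcong : ∀ y : ℝ, 12 / (π ^ 2 * x * (1 + y)) = 12 / (π ^ 2 * x) * (1 / (1 + y)) := by
    intro y
    rw [div_mul_div_comm, mul_one]
  simp_rw [hcong]
  rw [intervalIntegral.integral_const_mul]
  congr 1
  have hpos : ∀ y ∈ Set.uIcc p q, 0 < 1 + y := by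
    intro y hy
    rcases Set.mem_uIcc.1 hy with ⟨h1, _⟩ | ⟨h1, _⟩ <;> linarith
  refine intervalIntegral.integral_eq_sub_of_hasDerivAt
    (f := fun y => Real.log (1 + y)) (fun y hy => ?_) ?_
  · have h1 : HasDerivAt (fun y : ℝ => 1 + y) 1 y := by
      simpa using (hasDerivAt_id y).const_add 1
    have := (Real.hasDerivAt_log (ne_of_gt (hpos y hy))).comp y h1
    simpa [one_div, Function.comp_def] using this
  · apply ContinuousOn.intervalIntegrable
    apply ContinuousOn.div continuousOn_const
    · exact (continuous_const.add continuous_id).continuousOn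
    · exact fun y hy => ne_of_gt (hpos y hy)

-- derivative of x ↦ Li2 (x / c)
lemma hasDerivAt_li2_div {c x : ℝ} (hc : 1 ≤ c) (hx : 0 < x) (hxc : x < c) :
    HasDerivAt (fun t => Li2 (t / c)) (-Real.log (1 - x / c) / x) x := by
  have hc0 : (0 : ℝ) < c := lt_of_lt_of_le one_pos hc
  have habs : |x / c| < 1 := by
    rw [abs_of_pos (by positivity)]
    rw [div_lt_one hc0]; exact hxc
  have hne : x / c ≠ 0 := by positivity
  have h1 : HasDerivAt (fun t : ℝ => t / c) (1 / c) x := by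
    simpa [one_div] using (hasDerivAt_id x).div_const c
  have := (li2_hasDerivAt' habs hne).comp x h1
  convert this using 1
  · rfl
  · rfl
  · rfl
  field_simp

-- derivative of x ↦ Li2 (-x)
lemma hasDerivAt_li2_neg {x : ℝ} (hx : 0 < x) (hx1 : x < 1) :
    HasDerivAt (fun t => Li2 (-t)) (-(Real.log (1 + x) / x)) x := by
  have habs : |(-x)| < 1 := by rw [abs_neg, abs_of_pos hx]; exact hx1
  have hne : -x ≠ 0 := by intro h; nlinarith [neg_eq_zero.1 h]
  have := (li2_hasDerivAt' habs hne).comp x (hasDerivAt_neg x)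
  convert this using 1
  · rfl
  · rfl
  · rfl
  rw [sub_neg_eq_add]
  field_simp


noncomputable def GA (a x : ℝ) : ℝ :=
  (12 / π ^ 2) * ((2 * Real.log (a + 1) - Real.log a - Real.log (a + 2)) * Real.log x
    - Li2 (x / (a + 1)) + Li2 (x / (a + 2)))

lemma partA {a : ℝ} (ha : 1 ≤ a) :
    ∫ x in (1 / (a + 1))..1,
      12 / (π ^ 2 * x) * (Real.log (1 + (1 - x) / a) - Real.log (1 + (1 - x) / (a + 1)))
      = GA a 1 - GA a (1 / (a + 1)) := by
  have ha0 : 0 < a := lt_of_lt_of_le one_pos ha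
  have hle : 1 / (a + 1) ≤ 1 := by
    rw [div_le_one (by linarith)]; linarith
  have hmem : ∀ x ∈ Set.uIcc (1 / (a + 1)) 1, 0 < x ∧ x ≤ 1 := by
    intro x hx
    rw [Set.uIcc_of_le hle] at hx
    exact ⟨lt_of_lt_of_le (by positivity) hx.1, hx.2⟩
  refine intervalIntegral.integral_eq_sub_of_hasDerivAt (fun x hx => ?_) ?_
  · obtain ⟨hx0, hx1⟩ := hmem x hx
    have hxa1 : x < a + 1 := by linarith
    have hxa2 : x < a + 2 := by linarith
    have hlog : HasDerivAt Real.log x⁻¹ x := Real.hasDerivAt_log (ne_of_gt hx0)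
    have h2 := hasDerivAt_li2_div (c := a + 1) (by linarith) hx0 hxa1
    have h3 := hasDerivAt_li2_div (c := a + 2) (by linarith) hx0 hxa2
    have hG := (((hlog.const_mul (2 * Real.log (a + 1) - Real.log a - Real.log (a + 2))).sub
      h2).add h3).const_mul (12 / π ^ 2)
    convert hG using 1
    · rfl
    · rfl
    have hp1 : (0 : ℝ) < 1 - x / (a + 1) := by
      rw [sub_pos, div_lt_one (by linarith)]; exact hxa1
    have hp2 : (0 : ℝ) < 1 - x / (a + 2) := by
      rw [sub_pos, div_lt_one (by linarith)]; exact hxa2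
    have e1 : Real.log (1 + (1 - x) / a)
        = Real.log (a + 1) + Real.log (1 - x / (a + 1)) - Real.log a := by
      rw [show 1 + (1 - x) / a = ((a + 1) * (1 - x / (a + 1))) / a by field_simp; ring]
      rw [Real.log_div (by positivity) (by positivity),
        Real.log_mul (by positivity) (by positivity)]
    have e2 : Real.log (1 + (1 - x) / (a + 1))
        = Real.log (a + 2) + Real.log (1 - x / (a + 2)) - Real.log (a + 1) := by
      rw [show 1 + (1 - x) / (a + 1) = ((a + 2) * (1 - x / (a + 2))) / (a + 1) by
        field_simp; ring]
      rw [Real.log_div (by positivity) (by positivity),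
        Real.log_mul (by positivity) (by positivity)]
    rw [e1, e2]
    have hpi := Real.pi_ne_zero
    field_simp
    ring
  · apply ContinuousOn.intervalIntegrable
    apply ContinuousOn.mul
    · apply ContinuousOn.div continuousOn_const
      · exact (continuous_const.mul continuous_id).continuousOn
      · intro x hx
        have := (hmem x hx).1
        positivity
    · apply ContinuousOn.sub <;> apply ContinuousOn.log
      · fun_prop
      · intro x hx
        obtain ⟨hx0, hx1⟩ := hmem x hx
        have h1x : (0:ℝ) ≤ 1 - x := by linarith
        have : (0:ℝ) < 1 + (1 - x) / a := by positivity
        exact ne_of_gt this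
      · fun_prop
      · intro x hx
        obtain ⟨hx0, hx1⟩ := hmem x hx
        have h1x : (0:ℝ) ≤ 1 - x := by linarith
        have : (0:ℝ) < 1 + (1 - x) / (a + 1) := by positivity
        exact ne_of_gt this

noncomputable def GB (a x : ℝ) : ℝ :=
  (12 / π ^ 2) * (-Li2 (-x) + (Real.log (a + 1) - Real.log (a + 2)) * Real.log x
    + Li2 (x / (a + 2)))

lemma partB {a : ℝ} (ha : 1 ≤ a) :
    ∫ x in (1 / (a + 2))..(1 / (a + 1)),
      12 / (π ^ 2 * x) * (Real.log (1 + x) - Real.log (1 + (1 - x) / (a + 1)))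
      = GB a (1 / (a + 1)) - GB a (1 / (a + 2)) := by
  have ha0 : 0 < a := lt_of_lt_of_le one_pos ha
  have hle : 1 / (a + 2) ≤ 1 / (a + 1) := by
    apply div_le_div_of_nonneg_left one_pos.le (by linarith) (by linarith)
  have hmem : ∀ x ∈ Set.uIcc (1 / (a + 2)) (1 / (a + 1)), 0 < x ∧ x ≤ 1 / (a + 1) := by
    intro x hx
    rw [Set.uIcc_of_le hle] at hx
    exact ⟨lt_of_lt_of_le (by positivity) hx.1, hx.2⟩
  refine intervalIntegral.integral_eq_sub_of_hasDerivAt (fun x hx => ?_) ?_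
  · obtain ⟨hx0, hx1⟩ := hmem x hx
    have hx1' : x < 1 := by
      apply lt_of_le_of_lt hx1
      rw [div_lt_one (by linarith)]; linarith
    have hxa2 : x < a + 2 := by linarith
    have hlog : HasDerivAt Real.log x⁻¹ x := Real.hasDerivAt_log (ne_of_gt hx0)
    have h1 := (hasDerivAt_li2_neg hx0 hx1').neg
    have h3 := hasDerivAt_li2_div (c := a + 2) (by linarith) hx0 hxa2
    have hG := ((h1.add
      (hlog.const_mul (Real.log (a + 1) - Real.log (a + 2)))).add h3).const_mul (12 / π ^ 2)
    convert hG using 1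
    · rfl
    · rfl
    have hp2 : (0 : ℝ) < 1 - x / (a + 2) := by
      rw [sub_pos, div_lt_one (by linarith)]; exact hxa2
    have e2 : Real.log (1 + (1 - x) / (a + 1))
        = Real.log (a + 2) + Real.log (1 - x / (a + 2)) - Real.log (a + 1) := by
      rw [show 1 + (1 - x) / (a + 1) = ((a + 2) * (1 - x / (a + 2))) / (a + 1) by
        field_simp; ring]
      rw [Real.log_div (by positivity) (by positivity),
        Real.log_mul (by positivity) (by positivity)]
    rw [e2]
    have hpi := Real.pi_ne_zero
    field_simp
    ring
  · apply ContinuousOn.intervalIntegrable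
    apply ContinuousOn.mul
    · apply ContinuousOn.div continuousOn_const
      · exact (continuous_const.mul continuous_id).continuousOn
      · intro x hx
        have := (hmem x hx).1
        positivity
    · apply ContinuousOn.sub <;> apply ContinuousOn.log
      · fun_prop
      · intro x hx
        obtain ⟨hx0, hx1⟩ := hmem x hx
        have : (0:ℝ) < 1 + x := by linarith
        exact ne_of_gt this
      · fun_prop
      · intro x hx
        obtain ⟨hx0, hx1⟩ := hmem x hx
        have hx1' : x ≤ 1 := by
          apply le_trans hx1
          rw [div_le_one (by linarith)]; linarith
        have h1x : (0:ℝ) ≤ 1 - x := by linarith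
        have : (0:ℝ) < 1 + (1 - x) / (a + 1) := by positivity
        exact ne_of_gt this


theorem stmt10 (k : ℕ) (hk : 1 ≤ k) :
    (∫ x in (1 / (k + 1 : ℝ))..1,
        ∫ y in ((1 - x) / (k + 1))..((1 - x) / k), 12 / (π ^ 2 * x * (1 + y)))
    + (∫ x in (1 / (k + 2 : ℝ))..(1 / (k + 1 : ℝ)),
        ∫ y in ((1 - x) / (k + 1))..x, 12 / (π ^ 2 * x * (1 + y)))
    = (6 / π ^ 2) *
        (Li2 (1 / (k + 1 : ℝ) ^ 2) - Li2 (1 / (k + 2 : ℝ) ^ 2)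
          + 4 * (Real.log (k + 1)) ^ 2
          - 2 * (Real.log ((k + 2 : ℝ) / (k + 1))) ^ 2
          - 2 * Real.log (k * (k + 2 : ℝ)) * Real.log (k + 1)) := by
  have ha : (1 : ℝ) ≤ (k : ℝ) := by exact_mod_cast hk
  set a : ℝ := (k : ℝ) with hadef
  have ha0 : (0 : ℝ) < a := lt_of_lt_of_le one_pos ha
  have hle1 : 1 / (a + 1) ≤ 1 := by
    rw [div_le_one (by linarith)]; linarith
  have hle2 : 1 / (a + 2) ≤ 1 / (a + 1) :=
    div_le_div_of_nonneg_left one_pos.le (by linarith) (by linarith)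
  have hIA : (∫ x in (1 / (a + 1))..1,
        ∫ y in ((1 - x) / (a + 1))..((1 - x) / a), 12 / (π ^ 2 * x * (1 + y)))
      = ∫ x in (1 / (a + 1))..1,
          12 / (π ^ 2 * x) * (Real.log (1 + (1 - x) / a) - Real.log (1 + (1 - x) / (a + 1))) := by
    apply intervalIntegral.integral_congr
    intro x hx
    rw [Set.uIcc_of_le hle1] at hx
    have hx0 : 0 < x := lt_of_lt_of_le (by positivity) hx.1
    have h1x : (0:ℝ) ≤ 1 - x := by linarith [hx.2]
    have hp : (-1:ℝ) < (1 - x) / (a + 1) := by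
      have : (0:ℝ) ≤ (1 - x) / (a + 1) := by positivity
      linarith
    have hq : (-1:ℝ) < (1 - x) / a := by
      have : (0:ℝ) ≤ (1 - x) / a := by positivity
      linarith
    exact inner_int x _ _ (ne_of_gt hx0) hp hq
  have hIB : (∫ x in (1 / (a + 2))..(1 / (a + 1)),
        ∫ y in ((1 - x) / (a + 1))..x, 12 / (π ^ 2 * x * (1 + y)))
      = ∫ x in (1 / (a + 2))..(1 / (a + 1)),
          12 / (π ^ 2 * x) * (Real.log (1 + x) - Real.log (1 + (1 - x) / (a + 1))) := by
    apply intervalIntegral.integral_congr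
    intro x hx
    rw [Set.uIcc_of_le hle2] at hx
    have hx0 : 0 < x := lt_of_lt_of_le (by positivity) hx.1
    have hx1 : x ≤ 1 := le_trans hx.2 hle1
    have h1x : (0:ℝ) ≤ 1 - x := by linarith
    have hp : (-1:ℝ) < (1 - x) / (a + 1) := by
      have : (0:ℝ) ≤ (1 - x) / (a + 1) := by positivity
      linarith
    exact inner_int x _ _ (ne_of_gt hx0) hp (by linarith)
  rw [hIA, hIB, partA ha, partB ha]
  simp only [GA, GB]
  have l1 : Real.log (1 / (a + 1)) = -Real.log (a + 1) := by rw [one_div, Real.log_inv]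
  have l2 : Real.log (1 / (a + 2)) = -Real.log (a + 2) := by rw [one_div, Real.log_inv]
  have q1 : (1 / (a + 1)) / (a + 1) = 1 / (a + 1) ^ 2 := by rw [div_div, ← pow_two]
  have q2 : (1 / (a + 2)) / (a + 2) = 1 / (a + 2) ^ 2 := by rw [div_div, ← pow_two]
  have r1 : Real.log ((a + 2) / (a + 1)) = Real.log (a + 2) - Real.log (a + 1) :=
    Real.log_div (by positivity) (by positivity)
  have r2 : Real.log (a * (a + 2)) = Real.log a + Real.log (a + 2) :=
    Real.log_mul (by positivity) (by positivity)
  have habs1 : |1 / (a + 1)| ≤ 1 := by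
    rw [abs_of_pos (by positivity)]; exact hle1
  have habs2 : |1 / (a + 2)| ≤ 1 := by
    rw [abs_of_pos (by positivity)]
    rw [div_le_one (by linarith)]; linarith
  have h1 := li2_sq habs1
  have h2 := li2_sq habs2
  have s1 : (1 / (a + 1)) ^ 2 = 1 / (a + 1) ^ 2 := by rw [div_pow, one_pow]
  have s2 : (1 / (a + 2)) ^ 2 = 1 / (a + 2) ^ 2 := by rw [div_pow, one_pow]
  rw [s1] at h1
  rw [s2] at h2
  rw [l1, l2, q1, q2, r1, r2, Real.log_one]
  linear_combination (12 / π ^ 2) * h2 - (12 / π ^ 2) * h1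
end

section
/- The functions η_k(s) = s^k e^{-s}/(k+1)! and e_k(s) = L_k¹(s) all belong to L²((0,∞), dm) where dm(s) = (s/(e^s−1)) ds, and the series ∑_{k=0}^∞ ‖e_k‖_{L²(dm)} · ‖η_k‖_{L²(dm)} converges. -/
open Real MeasureTheory
open scoped ENNReal NNReal
open Finset Set

/-- The generalized Laguerre polynomial of order 1:
L_n¹(t) = ∑_{i=0}^n (−1)^i C(n+1, n−i) tⁱ/i!. -/
noncomputable def laguerre1 (n : ℕ) (t : ℝ) : ℝ :=
  ∑ i ∈ Finset.range (n + 1),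
    (-1) ^ i * (Nat.choose (n + 1) (n - i) : ℝ) * t ^ i / (Nat.factorial i : ℝ)

/-- The measure dm(s) = s/(eˢ − 1) ds on (0,∞). -/
noncomputable def mMeasure : Measure ℝ :=
  (volume.restrict (Set.Ioi (0:ℝ))).withDensity
    (fun s => ENNReal.ofReal (s / (Real.exp s - 1)))

/-- η_k(s) = s^k e^{-s}/(k+1)!. -/
noncomputable def etaFun (k : ℕ) (s : ℝ) : ℝ :=
  s ^ k * Real.exp (-s) / (Nat.factorial (k + 1) : ℝ)

/-! ### Combinatorial lemmas -/

def Fc (n m r : ℕ) : ℤ :=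
  ∑ j ∈ Finset.range (n + 1), (-1) ^ j * (n.choose j : ℤ) * ((m + j).choose r : ℤ)

lemma Fc_zero (m r : ℕ) : Fc 0 m r = (m.choose r : ℤ) := by simp [Fc]

lemma Fc_r_zero (n m : ℕ) : Fc (n + 1) m 0 = 0 := by
  have h := Int.alternating_sum_range_choose (n := n + 1)
  rw [if_neg (Nat.succ_ne_zero n)] at h
  simpa [Fc] using h

lemma Fc_rec (n m r : ℕ) : Fc (n + 1) m (r + 1) = - Fc n m r := by
  classical
  set g : ℕ → ℤ := fun i => (-1) ^ i * (n.choose i : ℤ) * ((m + i).choose (r + 1) : ℤ) with hg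
  have key : ∀ i, (-1:ℤ) ^ (i+1) * ((n+1).choose (i+1) : ℤ) * ((m + (i+1)).choose (r+1) : ℤ)
      = (g (i+1) - g i) - (-1) ^ i * (n.choose i : ℤ) * ((m + i).choose r : ℤ) := by
    intro i
    have h1 : (n+1).choose (i+1) = n.choose i + n.choose (i+1) := Nat.choose_succ_succ' n i
    have h2 : (m + (i+1)).choose (r+1) = (m+i).choose r + (m+i).choose (r+1) := by
      rw [show m + (i+1) = (m+i) + 1 by ring]
      exact Nat.choose_succ_succ' (m+i) r
    simp only [hg]
    push_cast [h1, h2]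
    ring
  have : Fc (n + 1) m (r + 1)
      = (∑ i ∈ range (n+1),
          ((g (i+1) - g i) - (-1) ^ i * (n.choose i : ℤ) * ((m + i).choose r : ℤ)))
        + (-1:ℤ)^0 * ((n+1).choose 0 : ℤ) * ((m+0).choose (r+1) : ℤ) := by
    rw [Fc, Finset.sum_range_succ' _ (n+1)]
    congr 1
    exact Finset.sum_congr rfl fun i _ => key i
  rw [this, Finset.sum_sub_distrib, Finset.sum_range_sub g]
  have hgn : g (n+1) = 0 := by simp [hg, Nat.choose_succ_self]
  have hg0 : g 0 = ((m).choose (r+1) : ℤ) := by simp [hg]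
  rw [hgn, hg0]
  simp only [Fc, pow_zero, Nat.choose_zero_right, Nat.cast_one, one_mul, add_zero]
  ring

lemma Fc_eq_zero : ∀ n m r : ℕ, r < n → Fc n m r = 0 := by
  intro n
  induction n with
  | zero => intro m r h; omega
  | succ n ih =>
    intro m r h
    cases r with
    | zero => exact Fc_r_zero n m
    | succ r => rw [Fc_rec]; rw [ih m r (by omega)]; ring

lemma Fc_diag : ∀ n m : ℕ, Fc n m n = (-1) ^ n := by
  intro n
  induction n with
  | zero => intro m; simp [Fc_zero]
  | succ n ih => intro m; rw [Fc_rec, ih m]; ring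

lemma Fc_peel (n m r : ℕ) :
    ∑ i ∈ Finset.range n, (-1:ℤ) ^ i * (n.choose (i+1) : ℤ) * ((m + 1 + i).choose r : ℤ)
      = (m.choose r : ℤ) - Fc n m r := by
  have h0 : Fc n m r
      = (∑ i ∈ range n, (-1:ℤ) ^ (i+1) * (n.choose (i+1) : ℤ) * ((m + (i+1)).choose r : ℤ))
      + (-1:ℤ)^0 * (n.choose 0 : ℤ) * ((m+0).choose r : ℤ) := by
    rw [Fc, Finset.sum_range_succ' _ n]
  rw [h0]
  simp only [pow_zero, Nat.choose_zero_right, Nat.cast_one, one_mul, add_zero]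
  have h1 : ∀ i, (-1:ℤ) ^ (i+1) * (n.choose (i+1) : ℤ) * ((m + (i+1)).choose r : ℤ)
      = -((-1:ℤ) ^ i * (n.choose (i+1) : ℤ) * ((m + 1 + i).choose r : ℤ)) := by
    intro i
    rw [show m + (i+1) = m + 1 + i by ring]
    ring
  rw [Finset.sum_congr rfl fun i _ => h1 i, Finset.sum_neg_distrib]
  ring

def Zc (k m : ℕ) : ℤ :=
  ∑ i ∈ Finset.range (k+1), (-1) ^ i * ((k+1).choose (i+1) : ℤ) * ((m + i).choose m : ℤ)

lemma Zc_zero (k : ℕ) : Zc k 0 = 1 := by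
  have h := Fc_peel (k+1) 0 0
  rw [Fc_r_zero] at h
  simpa [Zc] using h

lemma Zc_mid (k m : ℕ) (h1 : 1 ≤ m) (h2 : m ≤ k) : Zc k m = 0 := by
  obtain ⟨m', rfl⟩ : ∃ m', m = m' + 1 := ⟨m - 1, by omega⟩
  have h := Fc_peel (k+1) m' (m'+1)
  rw [Fc_eq_zero (k+1) m' (m'+1) (by omega), Nat.choose_succ_self] at h
  simpa [Zc] using h

lemma Zc_top (k : ℕ) : Zc k (k+1) = (-1) ^ k := by
  have h := Fc_peel (k+1) k (k+1)
  rw [Fc_diag (k+1) k, Nat.choose_succ_self] at h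
  rw [Zc, h]
  ring

/-! ### Integral computations -/

lemma integrableOn_pow_exp (n : ℕ) {r : ℝ} (hr : 0 < r) :
    IntegrableOn (fun s : ℝ => s ^ n * Real.exp (-(r * s))) (Set.Ioi 0) := by
  have h := integrableOn_rpow_mul_exp_neg_mul_rpow (p := 1) (s := (n : ℝ)) (b := r)
    (lt_of_lt_of_le neg_one_lt_zero (Nat.cast_nonneg n)) one_pos hr
  refine h.congr_fun (fun x hx => ?_) measurableSet_Ioi
  beta_reduce
  rw [Real.rpow_one, Real.rpow_natCast, neg_mul]

lemma integral_pow_exp (n : ℕ) {r : ℝ} (hr : 0 < r) :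
    ∫ s in Set.Ioi (0:ℝ), s ^ n * Real.exp (-(r * s)) = (n.factorial : ℝ) / r ^ (n + 1) := by
  have h := integral_rpow_mul_exp_neg_mul_Ioi (a := (n : ℝ) + 1) (r := r) (by positivity) hr
  have h2 : ∫ t in Set.Ioi (0:ℝ), t ^ ((n : ℝ) + 1 - 1) * Real.exp (-(r * t))
      = ∫ s in Set.Ioi (0:ℝ), s ^ n * Real.exp (-(r * s)) := by
    refine setIntegral_congr_fun measurableSet_Ioi (fun x _ => ?_)
    rw [add_sub_cancel_right, Real.rpow_natCast]
  rw [h2] at h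
  rw [h, Real.Gamma_nat_eq_factorial]
  rw [show (n:ℝ) + 1 = ((n + 1 : ℕ) : ℝ) by push_cast; ring, Real.rpow_natCast]
  field_simp
  rw [← mul_pow, one_div, inv_mul_cancel₀ hr.ne', one_pow]

lemma integrableOn_pow_exp_one (n : ℕ) :
    IntegrableOn (fun s : ℝ => s ^ n * Real.exp (-s)) (Set.Ioi 0) := by
  have h := integrableOn_pow_exp n one_pos
  simpa using h

lemma integral_pow_exp_one (n : ℕ) :
    ∫ s in Set.Ioi (0:ℝ), s ^ n * Real.exp (-s) = (n.factorial : ℝ) := by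
  have h := integral_pow_exp n one_pos
  simp only [one_mul, one_pow] at h
  rw [h, div_one]

/-! ### Master Memℒp lemma -/

lemma density_le (x : ℝ) (hx : 0 < x) :
    x / (Real.exp x - 1) ≤ (1 + x) * Real.exp (-x) := by
  have hden : 0 < Real.exp x - 1 := by nlinarith [Real.add_one_le_exp x]
  rw [div_le_iff₀ hden]
  have h1 : (1 + x) * Real.exp (-x) * (Real.exp x - 1)
      = (1 + x) * (1 - Real.exp (-x)) := by
    rw [Real.exp_neg]
    field_simp
  rw [h1]
  have h2 : (1 + x) * Real.exp (-x) ≤ 1 := by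
    have h := Real.add_one_le_exp x
    calc (1 + x) * Real.exp (-x) ≤ Real.exp x * Real.exp (-x) :=
          mul_le_mul_of_nonneg_right (by linarith) (le_of_lt (Real.exp_pos _))
      _ = 1 := by rw [← Real.exp_add]; simp
  nlinarith [Real.exp_pos (-x)]

lemma memLp_and_bound (f : ℝ → ℝ) (hf : Continuous f) {V : ℝ}
    (hint : IntegrableOn (fun s => (f s)^2 * ((1+s) * Real.exp (-s))) (Set.Ioi 0))
    (hval : ∫ s in Set.Ioi (0:ℝ), (f s)^2 * ((1+s) * Real.exp (-s)) = V) :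
    MemLp f 2 mMeasure ∧ (eLpNorm f 2 mMeasure).toReal ≤ Real.sqrt V := by
  have hdmeas : Measurable (fun s : ℝ => ENNReal.ofReal (s / (Real.exp s - 1))) :=
    ENNReal.measurable_ofReal.comp (measurable_id.div ((Real.measurable_exp).sub measurable_const))
  have hV0 : 0 ≤ V := by
    rw [← hval]
    refine setIntegral_nonneg measurableSet_Ioi (fun x hx => ?_)
    have : (0:ℝ) < x := hx
    positivity
  have hlint : ∫⁻ x, (‖f x‖₊ : ℝ≥0∞) ^ (2:ℕ) ∂mMeasure ≤ ENNReal.ofReal V := by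
    rw [mMeasure, lintegral_withDensity_eq_lintegral_mul_non_measurable _ hdmeas
      (Filter.Eventually.of_forall (fun x => ENNReal.ofReal_lt_top))]
    have step : ∫⁻ x in Set.Ioi (0:ℝ),
        (ENNReal.ofReal (x / (Real.exp x - 1)) * (‖f x‖₊ : ℝ≥0∞) ^ (2:ℕ))
        ≤ ∫⁻ x in Set.Ioi (0:ℝ), ENNReal.ofReal ((f x)^2 * ((1+x) * Real.exp (-x))) := by
      refine setLIntegral_mono_ae (by fun_prop) ?_
      · refine Filter.Eventually.of_forall (fun x hx => ?_)
        have hx0 : (0:ℝ) < x := hx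
        have hnn : (‖f x‖₊ : ℝ≥0∞) ^ (2:ℕ) = ENNReal.ofReal ((f x)^2) := by
          rw [← enorm_eq_nnnorm, ← ofReal_norm, ← ENNReal.ofReal_pow (norm_nonneg _),
            Real.norm_eq_abs, sq_abs]
        have hden : (0:ℝ) < Real.exp x - 1 := by nlinarith [Real.add_one_le_exp x]
        rw [hnn, ← ENNReal.ofReal_mul (div_nonneg hx0.le hden.le)]
        refine ENNReal.ofReal_le_ofReal ?_
        rw [mul_comm]
        exact mul_le_mul_of_nonneg_left (density_le x hx0) (sq_nonneg _)
    calc ∫⁻ x in Set.Ioi (0:ℝ),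
        ((fun s => ENNReal.ofReal (s / (Real.exp s - 1))) * fun x => (‖f x‖₊ : ℝ≥0∞) ^ (2:ℕ)) x
        = ∫⁻ x in Set.Ioi (0:ℝ),
          ENNReal.ofReal (x / (Real.exp x - 1)) * (‖f x‖₊ : ℝ≥0∞) ^ (2:ℕ) := rfl
      _ ≤ ∫⁻ x in Set.Ioi (0:ℝ), ENNReal.ofReal ((f x)^2 * ((1+x) * Real.exp (-x))) := step
      _ = ENNReal.ofReal V := by
          rw [← MeasureTheory.ofReal_integral_eq_lintegral_ofReal hint ?_, hval]
          refine (ae_restrict_iff' measurableSet_Ioi).mpr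
            (Filter.Eventually.of_forall (fun x hx => ?_))
          have : (0:ℝ) < x := hx
          positivity
  have help : eLpNorm f 2 mMeasure ≤ ENNReal.ofReal (Real.sqrt V) := by
    rw [eLpNorm_eq_lintegral_rpow_enorm_toReal (p := 2) (by norm_num) (by norm_num)]
    have h2 : (2:ℝ≥0∞).toReal = 2 := by norm_num
    rw [h2]
    have hpow : ∀ x : ℝ, (‖f x‖₊ : ℝ≥0∞) ^ (2:ℝ) = (‖f x‖₊ : ℝ≥0∞) ^ (2:ℕ) := by
      intro x; rw [← ENNReal.rpow_natCast]; norm_num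
    simp_rw [enorm_eq_nnnorm, hpow]
    calc (∫⁻ x, (‖f x‖₊ : ℝ≥0∞) ^ (2:ℕ) ∂mMeasure) ^ (1/2 : ℝ)
        ≤ (ENNReal.ofReal V) ^ (1/2 : ℝ) := ENNReal.rpow_le_rpow hlint (by norm_num)
      _ = ENNReal.ofReal (V ^ (1/2 : ℝ)) := by
          rw [← ENNReal.ofReal_rpow_of_nonneg hV0 (by norm_num)]
      _ = ENNReal.ofReal (Real.sqrt V) := by rw [Real.sqrt_eq_rpow]
  refine ⟨⟨hf.aestronglyMeasurable, lt_of_le_of_lt help ENNReal.ofReal_lt_top⟩,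
    ENNReal.toReal_le_of_le_ofReal (Real.sqrt_nonneg V) help⟩

/-! ### The Laguerre computation -/

noncomputable def cL (k : ℕ) : ℕ → ℝ :=
  fun i => (-1) ^ i * (((k+1).choose (i+1) : ℕ) : ℝ) / (i.factorial : ℝ)

lemma laguerre1_eq (k : ℕ) (t : ℝ) :
    laguerre1 k t = ∑ i ∈ Finset.range (k+1), cL k i * t ^ i := by
  rw [laguerre1]
  refine Finset.sum_congr rfl fun i hi => ?_
  have hik : i ≤ k := by
    have := Finset.mem_range.mp hi; omega
  have hch : (k+1).choose (k - i) = (k+1).choose (i+1) := by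
    have h := Nat.choose_symm (n := k+1) (k := i+1) (by omega)
    rw [show k + 1 - (i+1) = k - i by omega] at h
    exact h
  rw [hch, cL]
  ring

lemma laguerre_pt (k : ℕ) (s : ℝ) :
    (laguerre1 k s)^2 * ((1+s) * Real.exp (-s))
      = ∑ i ∈ Finset.range (k+1), ∑ j ∈ Finset.range (k+1),
          ((cL k i * cL k j) * (s^(i+j) * Real.exp (-s))
            + (cL k i * cL k j) * (s^(i+j+1) * Real.exp (-s))) := by
  rw [laguerre1_eq, sq, Finset.sum_mul_sum, Finset.sum_mul]
  refine Finset.sum_congr rfl fun i _ => ?_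
  rw [Finset.sum_mul]
  refine Finset.sum_congr rfl fun j _ => ?_
  ring

lemma laguerre_integrable (k : ℕ) :
    IntegrableOn (fun s => (laguerre1 k s)^2 * ((1+s) * Real.exp (-s))) (Set.Ioi 0) := by
  have : IntegrableOn (fun s : ℝ => ∑ i ∈ Finset.range (k+1), ∑ j ∈ Finset.range (k+1),
      ((cL k i * cL k j) * (s^(i+j) * Real.exp (-s))
        + (cL k i * cL k j) * (s^(i+j+1) * Real.exp (-s)))) (Set.Ioi 0) := by
    refine integrable_finset_sum _ fun i _ => integrable_finset_sum _ fun j _ => ?_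
    exact ((integrableOn_pow_exp_one (i+j)).const_mul _).add
      ((integrableOn_pow_exp_one (i+j+1)).const_mul _)
  exact this.congr_fun (fun s _ => (laguerre_pt k s).symm) measurableSet_Ioi

noncomputable def TL (k m : ℕ) : ℝ :=
  ∑ i ∈ Finset.range (k+1), cL k i * ((m+i).factorial : ℝ)

lemma TL_eq (k m : ℕ) : TL k m = (m.factorial : ℝ) * ((Zc k m : ℤ) : ℝ) := by
  rw [TL, Zc]
  push_cast
  rw [Finset.mul_sum]
  refine Finset.sum_congr rfl fun i _ => ?_
  have hn := Nat.add_choose_mul_factorial_mul_factorial i m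
  rw [Nat.add_comm i m] at hn
  have hfac : (((m+i).choose m : ℕ) : ℝ) * i.factorial * m.factorial = ((m+i).factorial : ℝ) := by
    exact_mod_cast hn
  rw [cL, ← hfac]
  have hi : (i.factorial : ℝ) ≠ 0 := Nat.cast_ne_zero.mpr i.factorial_ne_zero
  field_simp

lemma TL_zero (k : ℕ) : TL k 0 = 1 := by
  rw [TL_eq, Zc_zero]; simp

lemma TL_mid (k m : ℕ) (h1 : 1 ≤ m) (h2 : m ≤ k) : TL k m = 0 := by
  rw [TL_eq, Zc_mid k m h1 h2]; simp

lemma TL_top (k : ℕ) : TL k (k+1) = ((k+1).factorial : ℝ) * (-1)^k := by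
  rw [TL_eq, Zc_top]; push_cast; ring

lemma laguerre_value (k : ℕ) :
    ∫ s in Set.Ioi (0:ℝ), (laguerre1 k s)^2 * ((1+s) * Real.exp (-s)) = 2 * ((k:ℝ)+1) := by
  have hstep : ∫ s in Set.Ioi (0:ℝ), (laguerre1 k s)^2 * ((1+s) * Real.exp (-s))
      = ∑ i ∈ Finset.range (k+1), ∑ j ∈ Finset.range (k+1),
          ((cL k i * cL k j) * ((i+j).factorial : ℝ)
            + (cL k i * cL k j) * ((i+j+1).factorial : ℝ)) := by
    rw [show (fun s => (laguerre1 k s)^2 * ((1+s) * Real.exp (-s)))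
        = fun s : ℝ => ∑ i ∈ Finset.range (k+1), ∑ j ∈ Finset.range (k+1),
          ((cL k i * cL k j) * (s^(i+j) * Real.exp (-s))
            + (cL k i * cL k j) * (s^(i+j+1) * Real.exp (-s)))
      from funext fun s => laguerre_pt k s]
    have hint1 : ∀ i j : ℕ, Integrable
        (fun s : ℝ => (cL k i * cL k j) * (s^(i+j) * Real.exp (-s)))
        (volume.restrict (Set.Ioi 0)) := fun i j =>
      (integrableOn_pow_exp_one (i+j)).const_mul _
    have hint2 : ∀ i j : ℕ, Integrable
        (fun s : ℝ => (cL k i * cL k j) * (s^(i+j+1) * Real.exp (-s)))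
        (volume.restrict (Set.Ioi 0)) := fun i j =>
      (integrableOn_pow_exp_one (i+j+1)).const_mul _
    have hint12 : ∀ i j : ℕ, Integrable
        (fun s : ℝ => (cL k i * cL k j) * (s^(i+j) * Real.exp (-s))
          + (cL k i * cL k j) * (s^(i+j+1) * Real.exp (-s)))
        (volume.restrict (Set.Ioi 0)) := fun i j => (hint1 i j).add (hint2 i j)
    rw [integral_finset_sum _ (fun i _ => integrable_finset_sum _ fun j _ => hint12 i j)]
    refine Finset.sum_congr rfl fun i _ => ?_
    rw [integral_finset_sum _ (fun j _ => hint12 i j)]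
    refine Finset.sum_congr rfl fun j _ => ?_
    rw [integral_add (hint1 i j) (hint2 i j),
      integral_const_mul, integral_const_mul, integral_pow_exp_one, integral_pow_exp_one]
  rw [hstep]
  have hswap : ∑ i ∈ Finset.range (k+1), ∑ j ∈ Finset.range (k+1),
      ((cL k i * cL k j) * ((i+j).factorial : ℝ)
        + (cL k i * cL k j) * ((i+j+1).factorial : ℝ))
      = ∑ j ∈ Finset.range (k+1), (cL k j * TL k j + cL k j * TL k (j+1)) := by
    rw [Finset.sum_comm]
    refine Finset.sum_congr rfl fun j _ => ?_
    rw [TL, TL, Finset.mul_sum, Finset.mul_sum, ← Finset.sum_add_distrib]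
    refine Finset.sum_congr rfl fun i _ => ?_
    rw [show i + j = j + i by omega, show j + i + 1 = j + 1 + i by omega]
    ring
  rw [hswap, Finset.sum_add_distrib]
  have hS1 : ∑ j ∈ Finset.range (k+1), cL k j * TL k j = (k:ℝ) + 1 := by
    rw [Finset.sum_eq_single 0]
    · rw [TL_zero, cL]; simp
    · intro j hj hj0
      rw [TL_mid k j (by omega) (by have := Finset.mem_range.mp hj; omega)]
      ring
    · intro h; exact absurd (Finset.mem_range.mpr (by omega)) h
  have hS2 : ∑ j ∈ Finset.range (k+1), cL k j * TL k (j+1) = (k:ℝ) + 1 := by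
    rw [Finset.sum_eq_single k]
    · rw [TL_top, cL]
      simp only [Nat.choose_self, Nat.cast_one]
      rw [Nat.factorial_succ]
      have hk : (k.factorial : ℝ) ≠ 0 := Nat.cast_ne_zero.mpr k.factorial_ne_zero
      field_simp
      have hsq : (-1:ℝ)^k * (-1)^k = 1 := by rw [← mul_pow]; norm_num
      push_cast
      linear_combination ((k:ℝ)+1) * (k.factorial : ℝ) * hsq
    · intro j hj hjk
      rw [TL_mid k (j+1) (by omega) (by have := Finset.mem_range.mp hj; omega)]
      ring
    · intro h; exact absurd (Finset.mem_range.mpr (by omega)) h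
  rw [hS1, hS2]
  ring

/-! ### The eta computation -/

noncomputable def Veta (k : ℕ) : ℝ :=
  (((2*k).factorial : ℝ) * 3 + ((2*k+1).factorial : ℝ))
    / (3^(2*k+2) * (((k+1).factorial : ℝ))^2)

lemma eta_pt (k : ℕ) (s : ℝ) :
    (etaFun k s)^2 * ((1+s) * Real.exp (-s))
      = (((k+1).factorial : ℝ))⁻¹^2 * (s^(2*k) * Real.exp (-(3*s)))
        + (((k+1).factorial : ℝ))⁻¹^2 * (s^(2*k+1) * Real.exp (-(3*s))) := by
  have hexp : Real.exp (-(3*s)) = Real.exp (-s) * Real.exp (-s) * Real.exp (-s) := by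
    rw [← Real.exp_add, ← Real.exp_add]; ring_nf
  rw [etaFun, hexp]
  have h2k : s^(2*k) = s^k * s^k := by rw [← pow_add]; ring_nf
  have h2k1 : s^(2*k+1) = s^k * s^k * s := by rw [← pow_add, ← pow_succ]; ring_nf
  rw [h2k, h2k1]
  field_simp

lemma eta_integrable (k : ℕ) :
    IntegrableOn (fun s => (etaFun k s)^2 * ((1+s) * Real.exp (-s))) (Set.Ioi 0) := by
  have : IntegrableOn (fun s : ℝ =>
      (((k+1).factorial : ℝ))⁻¹^2 * (s^(2*k) * Real.exp (-(3*s)))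
        + (((k+1).factorial : ℝ))⁻¹^2 * (s^(2*k+1) * Real.exp (-(3*s)))) (Set.Ioi 0) :=
    ((integrableOn_pow_exp (2*k) (by norm_num)).const_mul _).add
      ((integrableOn_pow_exp (2*k+1) (by norm_num)).const_mul _)
  exact this.congr_fun (fun s _ => (eta_pt k s).symm) measurableSet_Ioi

lemma eta_value (k : ℕ) :
    ∫ s in Set.Ioi (0:ℝ), (etaFun k s)^2 * ((1+s) * Real.exp (-s)) = Veta k := by
  rw [show (fun s => (etaFun k s)^2 * ((1+s) * Real.exp (-s)))
      = fun s : ℝ => (((k+1).factorial : ℝ))⁻¹^2 * (s^(2*k) * Real.exp (-(3*s)))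
        + (((k+1).factorial : ℝ))⁻¹^2 * (s^(2*k+1) * Real.exp (-(3*s)))
    from funext fun s => eta_pt k s]
  have hint1 : Integrable
      (fun s : ℝ => (((k+1).factorial : ℝ))⁻¹^2 * (s^(2*k) * Real.exp (-(3*s))))
      (volume.restrict (Set.Ioi 0)) := (integrableOn_pow_exp (2*k) (by norm_num)).const_mul _
  have hint2 : Integrable
      (fun s : ℝ => (((k+1).factorial : ℝ))⁻¹^2 * (s^(2*k+1) * Real.exp (-(3*s))))
      (volume.restrict (Set.Ioi 0)) := (integrableOn_pow_exp (2*k+1) (by norm_num)).const_mul _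
  rw [integral_add hint1 hint2,
    integral_const_mul, integral_const_mul,
    integral_pow_exp (2*k) (by norm_num : (0:ℝ) < 3),
    integral_pow_exp (2*k+1) (by norm_num : (0:ℝ) < 3)]
  rw [Veta]
  have h1 : ((k+1).factorial : ℝ) ≠ 0 := Nat.cast_ne_zero.mpr (k+1).factorial_ne_zero
  have h3 : (3:ℝ) ≠ 0 := by norm_num
  rw [show 2*k+1+1 = 2*k+2 by omega]
  field_simp
  ring

/-! ### Quantitative bounds -/

lemma central_binom_bound (k : ℕ) : (2*k).factorial ≤ 4^k * (k.factorial)^2 := by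
  have h1 : (k + k).choose k * k.factorial * k.factorial = (k+k).factorial :=
    Nat.add_choose_mul_factorial_mul_factorial k k
  have h2 : (k+k).choose k ≤ 4^k := by
    have hsum := Nat.sum_range_choose (k+k)
    have hmem : k ∈ Finset.range (k+k+1) := Finset.mem_range.mpr (by omega)
    have hle : (k+k).choose k ≤ ∑ i ∈ Finset.range (k+k+1), (k+k).choose i :=
      Finset.single_le_sum (fun i _ => Nat.zero_le _) hmem
    rw [hsum] at hle
    calc (k+k).choose k ≤ 2^(k+k) := hle
      _ = 4^k := by rw [show k+k = 2*k by omega, pow_mul]; norm_num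
  calc (2*k).factorial = (k+k).factorial := by rw [show 2*k = k+k by omega]
    _ = (k+k).choose k * k.factorial * k.factorial := h1.symm
    _ ≤ 4^k * k.factorial * k.factorial :=
        Nat.mul_le_mul_right _ (Nat.mul_le_mul_right _ h2)
    _ = 4^k * (k.factorial)^2 := by ring

lemma nat_bound (k : ℕ) :
    (k+1) * (3 * (2*k).factorial + (2*k+1).factorial) ≤ 9 * 4^k * ((k+1).factorial)^2 := by
  have hfs : (2*k+1).factorial = (2*k+1) * (2*k).factorial := Nat.factorial_succ (2*k)
  have h1 : 3 * (2*k).factorial + (2*k+1).factorial = (2*k+4) * (2*k).factorial := by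
    rw [hfs]; ring
  rw [h1]
  have hcb := central_binom_bound k
  have hks : (k+1).factorial = (k+1) * k.factorial := Nat.factorial_succ k
  calc (k+1) * ((2*k+4) * (2*k).factorial)
      ≤ (k+1) * ((2*k+4) * (4^k * (k.factorial)^2)) :=
        Nat.mul_le_mul_left _ (Nat.mul_le_mul_left _ hcb)
    _ ≤ (k+1) * ((9*(k+1)) * (4^k * (k.factorial)^2)) :=
        Nat.mul_le_mul_left _ (Nat.mul_le_mul_right _ (by omega))
    _ = 9 * 4^k * ((k+1) * k.factorial)^2 := by ring
    _ = 9 * 4^k * ((k+1).factorial)^2 := by rw [← hks]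

lemma Veta_nonneg (k : ℕ) : 0 ≤ Veta k := by
  rw [Veta]; positivity

lemma prod_bound (k : ℕ) : 2 * ((k:ℝ)+1) * Veta k ≤ 2 * (4/9)^k := by
  have hD : (0:ℝ) < 3^(2*k+2) * (((k+1).factorial : ℝ))^2 := by positivity
  rw [Veta, mul_div_assoc', div_le_iff₀ hD]
  have hkey : ((4:ℝ)/9)^k * 3^(2*k+2) = 9 * 4^k := by
    rw [div_pow, show (3:ℝ)^(2*k+2) = (9:ℝ)^(k+1) by
      rw [show 2*k+2 = 2*(k+1) by omega, pow_mul]; norm_num]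
    rw [pow_succ]
    have : (9:ℝ)^k ≠ 0 := by positivity
    field_simp
  have hnat : ((k:ℝ)+1) * (3 * ((2*k).factorial : ℝ) + ((2*k+1).factorial : ℝ))
      ≤ 9 * 4^k * (((k+1).factorial : ℝ))^2 := by
    exact_mod_cast nat_bound k
  calc 2 * ((k:ℝ)+1) * (((2*k).factorial : ℝ) * 3 + ((2*k+1).factorial : ℝ))
      = 2 * (((k:ℝ)+1) * (3 * ((2*k).factorial : ℝ) + ((2*k+1).factorial : ℝ))) := by ring
    _ ≤ 2 * (9 * 4^k * (((k+1).factorial : ℝ))^2) := by linarith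
    _ = 2 * (4/9)^k * (3^(2*k+2) * (((k+1).factorial : ℝ))^2) := by
        rw [show 2 * ((4:ℝ)/9)^k * (3^(2*k+2) * (((k+1).factorial : ℝ))^2)
            = 2 * (((4:ℝ)/9)^k * 3^(2*k+2)) * (((k+1).factorial : ℝ))^2 by ring, hkey]
        ring

/-! ### Main theorem -/

lemma laguerre1_continuous (k : ℕ) : Continuous (laguerre1 k) := by
  unfold laguerre1
  exact continuous_finset_sum _ fun i _ =>
    ((continuous_const.mul (continuous_pow i)).div_const _)

lemma etaFun_continuous (k : ℕ) : Continuous (etaFun k) := by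
  unfold etaFun
  fun_prop

theorem stmt18 :
    (∀ k : ℕ, MemLp (etaFun k) 2 mMeasure) ∧
    (∀ k : ℕ, MemLp (laguerre1 k) 2 mMeasure) ∧
    Summable (fun k : ℕ =>
      (eLpNorm (laguerre1 k) 2 mMeasure).toReal * (eLpNorm (etaFun k) 2 mMeasure).toReal) := by
  have hEta := fun k => memLp_and_bound (etaFun k) (etaFun_continuous k)
    (eta_integrable k) (eta_value k)
  have hLag := fun k => memLp_and_bound (laguerre1 k) (laguerre1_continuous k)
    (laguerre_integrable k) (laguerre_value k)
  refine ⟨fun k => (hEta k).1, fun k => (hLag k).1, ?_⟩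
  have hbound : ∀ k : ℕ,
      (eLpNorm (laguerre1 k) 2 mMeasure).toReal * (eLpNorm (etaFun k) 2 mMeasure).toReal
        ≤ Real.sqrt 2 * (2/3)^k := by
    intro k
    have h1 := (hLag k).2
    have h2 := (hEta k).2
    calc (eLpNorm (laguerre1 k) 2 mMeasure).toReal * (eLpNorm (etaFun k) 2 mMeasure).toReal
        ≤ Real.sqrt (2 * ((k:ℝ)+1)) * Real.sqrt (Veta k) :=
          mul_le_mul h1 h2 ENNReal.toReal_nonneg (Real.sqrt_nonneg _)
      _ = Real.sqrt (2 * ((k:ℝ)+1) * Veta k) := (Real.sqrt_mul (by positivity) _).symm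
      _ ≤ Real.sqrt (2 * (4/9)^k) := Real.sqrt_le_sqrt (prod_bound k)
      _ = Real.sqrt 2 * (2/3)^k := by
          rw [show ((4:ℝ)/9)^k = (((2:ℝ)/3)^k)^2 by
            rw [← pow_mul, mul_comm k 2, pow_mul]; norm_num]
          rw [Real.sqrt_mul (by norm_num), Real.sqrt_sq (by positivity)]
  refine Summable.of_nonneg_of_le
    (fun k => mul_nonneg ENNReal.toReal_nonneg ENNReal.toReal_nonneg) hbound ?_
  exact (summable_geometric_of_lt_one (by norm_num) (by norm_num)).mul_left _
end
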